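/- Let F be a precompact subset of a Hilbert space H and let (T_n) be compact operators on H with ⟨T_n f − f, f⟩ → 0 for all f ∈ H. Then lim_{n→∞} sup_{f∈F} |⟨T_n f − f, f⟩| = 0. -/

import Mathlib

open scoped InnerProductSpace

/-- Pointwise boundedness of the quadratic forms of a sequence of operators. -/
lemma quad_bound_aux {H : Type*} [NormedAddCommGroup H] [InnerProductSpace ℂ H]
    (T : ℕ → H →L[ℂ] H)
    (hconv : ∀ f : H,
      Filter.Tendsto (fun n => ⟪T n f - f, f⟫_ℂ) Filter.atTop (nhds 0)) :
    ∀ h : H, ∃ C : ℝ, ∀ n, ‖⟪T n h, h⟫_ℂ‖ ≤ C := by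
  intro h
  have hb : BddAbove (Set.range fun n => ‖⟪T n h - h, h⟫_ℂ‖) :=
    ((hconv h).norm).bddAbove_range
  obtain ⟨C, hC⟩ := hb
  refine ⟨C + ‖(⟪h, h⟫_ℂ : ℂ)‖, fun n => ?_⟩
  have h1 : (⟪T n h, h⟫_ℂ : ℂ) = ⟪T n h - h, h⟫_ℂ + ⟪h, h⟫_ℂ := by
    rw [inner_sub_left]; ring
  have h2 : ‖⟪T n h - h, h⟫_ℂ‖ ≤ C := hC ⟨n, rfl⟩
  calc ‖(⟪T n h, h⟫_ℂ : ℂ)‖ = ‖⟪T n h - h, h⟫_ℂ + ⟪h, h⟫_ℂ‖ := by rw [h1]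
    _ ≤ ‖⟪T n h - h, h⟫_ℂ‖ + ‖(⟪h, h⟫_ℂ : ℂ)‖ := norm_add_le _ _
    _ ≤ C + ‖(⟪h, h⟫_ℂ : ℂ)‖ := by linarith

/-- Uniform boundedness of the operators, via polarization and Banach–Steinhaus. -/
lemma uniform_bound_aux {H : Type*} [NormedAddCommGroup H] [InnerProductSpace ℂ H]
    [CompleteSpace H] (T : ℕ → H →L[ℂ] H)
    (hconv : ∀ f : H,
      Filter.Tendsto (fun n => ⟪T n f - f, f⟫_ℂ) Filter.atTop (nhds 0)) :
    ∃ C : ℝ, ∀ n, ‖T n‖ ≤ C := by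
  have hq := quad_bound_aux T hconv
  -- polarization: pointwise bound of ⟪T n y, x⟫ for all x y
  have hpol : ∀ x y : H, ∃ C : ℝ, ∀ n, ‖⟪T n y, x⟫_ℂ‖ ≤ C := by
    intro x y
    obtain ⟨C1, hC1⟩ := hq (x + y)
    obtain ⟨C2, hC2⟩ := hq (x - y)
    obtain ⟨C3, hC3⟩ := hq (x + Complex.I • y)
    obtain ⟨C4, hC4⟩ := hq (x - Complex.I • y)
    refine ⟨(C1 + C2 + C3 + C4) / 4, fun n => ?_⟩
    have hp := inner_map_polarization ((T n) : H →ₗ[ℂ] H) x y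
    simp only [ContinuousLinearMap.coe_coe] at hp
    rw [hp]
    have hI : ‖(Complex.I : ℂ)‖ = 1 := Complex.norm_I
    calc ‖(⟪T n (x + y), x + y⟫_ℂ - ⟪T n (x - y), x - y⟫_ℂ +
            Complex.I * ⟪T n (x + Complex.I • y), x + Complex.I • y⟫_ℂ -
            Complex.I * ⟪T n (x - Complex.I • y), x - Complex.I • y⟫_ℂ) / 4‖
        = ‖⟪T n (x + y), x + y⟫_ℂ - ⟪T n (x - y), x - y⟫_ℂ +
            Complex.I * ⟪T n (x + Complex.I • y), x + Complex.I • y⟫_ℂ -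
            Complex.I * ⟪T n (x - Complex.I • y), x - Complex.I • y⟫_ℂ‖ / 4 := by
          rw [norm_div]; norm_num
      _ ≤ (C1 + C2 + C3 + C4) / 4 := by
          have := hC1 n; have := hC2 n; have := hC3 n; have := hC4 n
          have hb : ‖⟪T n (x + y), x + y⟫_ℂ - ⟪T n (x - y), x - y⟫_ℂ +
              Complex.I * ⟪T n (x + Complex.I • y), x + Complex.I • y⟫_ℂ -
              Complex.I * ⟪T n (x - Complex.I • y), x - Complex.I • y⟫_ℂ‖
              ≤ C1 + C2 + C3 + C4 := by
            have t1 := norm_sub_le (⟪T n (x + y), x + y⟫_ℂ - ⟪T n (x - y), x - y⟫_ℂ +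
              Complex.I * ⟪T n (x + Complex.I • y), x + Complex.I • y⟫_ℂ)
              (Complex.I * ⟪T n (x - Complex.I • y), x - Complex.I • y⟫_ℂ)
            have t2 := norm_add_le (⟪T n (x + y), x + y⟫_ℂ - ⟪T n (x - y), x - y⟫_ℂ)
              (Complex.I * ⟪T n (x + Complex.I • y), x + Complex.I • y⟫_ℂ)
            have t3 := norm_sub_le (⟪T n (x + y), x + y⟫_ℂ) (⟪T n (x - y), x - y⟫_ℂ)
            have t4 : ‖Complex.I * ⟪T n (x + Complex.I • y), x + Complex.I • y⟫_ℂ‖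
                = ‖⟪T n (x + Complex.I • y), x + Complex.I • y⟫_ℂ‖ := by
              rw [norm_mul, hI, one_mul]
            have t5 : ‖Complex.I * ⟪T n (x - Complex.I • y), x - Complex.I • y⟫_ℂ‖
                = ‖⟪T n (x - Complex.I • y), x - Complex.I • y⟫_ℂ‖ := by
              rw [norm_mul, hI, one_mul]
            rw [t4] at t2; rw [t5] at t1
            linarith
          linarith
  -- Banach–Steinhaus for the functionals g ↦ ⟪T n f, g⟫ gives pointwise bound on ‖T n f‖
  have hpt : ∀ f : H, ∃ C : ℝ, ∀ n, ‖T n f‖ ≤ C := by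
    intro f
    have h0 : ∀ x : H, ∃ C : ℝ, ∀ n, ‖(innerSL ℂ (T n f)) x‖ ≤ C := by
      intro x
      obtain ⟨C, hC⟩ := hpol x f
      exact ⟨C, fun n => hC n⟩
    obtain ⟨C', hC'⟩ := banach_steinhaus (g := fun n => innerSL ℂ (T n f)) h0
    refine ⟨C', fun n => ?_⟩
    have := hC' n
    rwa [innerSL_apply_norm] at this
  exact banach_steinhaus hpt

/-- If `F` is a precompact subset of a Hilbert space and `(T n)` are compact operators with
`⟪T n f - f, f⟫ → 0` for every `f`, then the quadratic forms vanish uniformly on `F`. -/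
theorem uniform_quadratic_form_decay_of_precompact
    {H : Type*} [NormedAddCommGroup H] [InnerProductSpace ℂ H] [CompleteSpace H]
    (T : ℕ → H →L[ℂ] H) (hT : ∀ n, IsCompactOperator (T n))
    (hconv : ∀ f : H,
      Filter.Tendsto (fun n => ⟪T n f - f, f⟫_ℂ) Filter.atTop (nhds 0))
    (F : Set H) (hF : IsCompact (closure F)) :
    ∀ ε > 0, ∃ N : ℕ, ∀ n ≥ N, ∀ f ∈ F, ‖⟪T n f - f, f⟫_ℂ‖ < ε := by
  obtain ⟨C₀, hC₀⟩ := uniform_bound_aux T hconv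
  set C : ℝ := max C₀ 0 with hCdef
  have hC : ∀ n, ‖T n‖ ≤ C := fun n => (hC₀ n).trans (le_max_left _ _)
  have hC0 : 0 ≤ C := le_max_right _ _
  -- bound on F
  obtain ⟨M₀, hM₀⟩ := isBounded_iff_forall_norm_le.mp hF.isBounded
  set M : ℝ := max M₀ 0 with hMdef
  have hM : ∀ f ∈ F, ‖f‖ ≤ M := fun f hf =>
    (hM₀ f (subset_closure hf)).trans (le_max_left _ _)
  have hM0 : 0 ≤ M := le_max_right _ _
  -- Lipschitz-type estimate for the quadratic forms on F
  have key : ∀ n, ∀ f ∈ F, ∀ g ∈ F,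
      ‖⟪T n f - f, f⟫_ℂ - ⟪T n g - g, g⟫_ℂ‖ ≤ (C + 1) * (2 * M) * ‖f - g‖ := by
    intro n f hf g hg
    set S : H →L[ℂ] H := T n - ContinuousLinearMap.id ℂ H with hS
    have hSnorm : ‖S‖ ≤ C + 1 := by
      calc ‖S‖ ≤ ‖T n‖ + ‖ContinuousLinearMap.id ℂ H‖ := norm_sub_le _ _
        _ ≤ C + 1 := add_le_add (hC n) ContinuousLinearMap.norm_id_le
    have hSf : ∀ x : H, S x = T n x - x := fun x => rfl
    have hsplit : (⟪T n f - f, f⟫_ℂ - ⟪T n g - g, g⟫_ℂ : ℂ)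
        = ⟪S (f - g), f⟫_ℂ + ⟪S g, f - g⟫_ℂ := by
      rw [map_sub S f g]
      simp only [hSf, inner_sub_left, inner_sub_right]
      ring
    rw [hsplit]
    have e1 : ‖(⟪S (f - g), f⟫_ℂ : ℂ)‖ ≤ (C + 1) * ‖f - g‖ * ‖f‖ := by
      calc ‖(⟪S (f - g), f⟫_ℂ : ℂ)‖ ≤ ‖S (f - g)‖ * ‖f‖ := norm_inner_le_norm _ _
        _ ≤ (‖S‖ * ‖f - g‖) * ‖f‖ := by
            exact mul_le_mul_of_nonneg_right (S.le_opNorm _) (norm_nonneg _)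
        _ ≤ ((C + 1) * ‖f - g‖) * ‖f‖ := by
            have : ‖S‖ * ‖f - g‖ ≤ (C + 1) * ‖f - g‖ :=
              mul_le_mul_of_nonneg_right hSnorm (norm_nonneg _)
            exact mul_le_mul_of_nonneg_right this (norm_nonneg _)
    have e2 : ‖(⟪S g, f - g⟫_ℂ : ℂ)‖ ≤ (C + 1) * ‖g‖ * ‖f - g‖ := by
      calc ‖(⟪S g, f - g⟫_ℂ : ℂ)‖ ≤ ‖S g‖ * ‖f - g‖ := norm_inner_le_norm _ _
        _ ≤ (‖S‖ * ‖g‖) * ‖f - g‖ := by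
            exact mul_le_mul_of_nonneg_right (S.le_opNorm _) (norm_nonneg _)
        _ ≤ ((C + 1) * ‖g‖) * ‖f - g‖ := by
            have : ‖S‖ * ‖g‖ ≤ (C + 1) * ‖g‖ :=
              mul_le_mul_of_nonneg_right hSnorm (norm_nonneg _)
            exact mul_le_mul_of_nonneg_right this (norm_nonneg _)
    have hfM := hM f hf
    have hgM := hM g hg
    have hfinal : (C + 1) * ‖f - g‖ * ‖f‖ + (C + 1) * ‖g‖ * ‖f - g‖
        ≤ (C + 1) * (2 * M) * ‖f - g‖ := by
      nlinarith [norm_nonneg (f - g), norm_nonneg f, norm_nonneg g, hfM, hgM, hC0,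
        mul_le_mul_of_nonneg_left hfM (mul_nonneg (by linarith : (0:ℝ) ≤ C + 1) (norm_nonneg (f - g))),
        mul_le_mul_of_nonneg_right (mul_le_mul_of_nonneg_left hgM (by linarith : (0:ℝ) ≤ C + 1)) (norm_nonneg (f - g))]
    calc ‖(⟪S (f - g), f⟫_ℂ + ⟪S g, f - g⟫_ℂ : ℂ)‖
        ≤ ‖(⟪S (f - g), f⟫_ℂ : ℂ)‖ + ‖(⟪S g, f - g⟫_ℂ : ℂ)‖ := norm_add_le _ _
      _ ≤ (C + 1) * ‖f - g‖ * ‖f‖ + (C + 1) * ‖g‖ * ‖f - g‖ := add_le_add e1 e2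
      _ ≤ (C + 1) * (2 * M) * ‖f - g‖ := hfinal
  -- ε/3 argument
  intro ε hε
  set K : ℝ := (C + 1) * (2 * M) + 1 with hK
  have hKpos : 0 < K := by positivity
  set δ : ℝ := ε / (2 * K) with hδ
  have hδpos : 0 < δ := by positivity
  -- finite δ-net inside F
  have hTB : TotallyBounded F :=
    (hF.totallyBounded).subset subset_closure
  obtain ⟨t, htF, htfin, htcov⟩ :=
    totallyBounded_iff_subset.mp hTB {p : H × H | dist p.1 p.2 < δ}
      (Metric.dist_mem_uniformity hδpos)
  -- eventually the quadratic form is small at every point of the net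
  have hev : ∀ᶠ n in Filter.atTop, ∀ g ∈ t, ‖⟪T n g - g, g⟫_ℂ‖ < ε / 2 := by
    apply (htfin.eventually_all).mpr
    intro g _
    have := (hconv g).norm
    simp only [norm_zero] at this
    have h2 : ∀ᶠ n in Filter.atTop, ‖⟪T n g - g, g⟫_ℂ‖ < ε / 2 :=
      this.eventually_lt_const (by positivity)
    exact h2
  obtain ⟨N, hN⟩ := Filter.eventually_atTop.mp hev
  refine ⟨N, fun n hn f hf => ?_⟩
  obtain ⟨g, hgt, hfg⟩ : ∃ g ∈ t, dist f g < δ := by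
    have := htcov hf
    simp only [Set.mem_iUnion, Set.mem_setOf_eq] at this
    obtain ⟨g, hg1, hg2⟩ := this
    exact ⟨g, hg1, hg2⟩
  have hgF : g ∈ F := htF hgt
  have hsmall : ‖⟪T n g - g, g⟫_ℂ‖ < ε / 2 := hN n hn g hgt
  have hkey := key n f hf g hgF
  have hdist : ‖f - g‖ < δ := by rwa [← dist_eq_norm]
  have hlip : ‖⟪T n f - f, f⟫_ℂ - ⟪T n g - g, g⟫_ℂ‖ < ε / 2 := by
    have h1 : (C + 1) * (2 * M) * ‖f - g‖ ≤ (C + 1) * (2 * M) * δ :=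
      mul_le_mul_of_nonneg_left hdist.le (by positivity)
    have h2 : (C + 1) * (2 * M) * δ < K * δ := by
      have : (C + 1) * (2 * M) < K := by rw [hK]; linarith
      exact mul_lt_mul_of_pos_right this hδpos
    have h3 : K * δ = ε / 2 := by
      rw [hδ]; field_simp
    linarith
  calc ‖(⟪T n f - f, f⟫_ℂ : ℂ)‖
      ≤ ‖⟪T n f - f, f⟫_ℂ - ⟪T n g - g, g⟫_ℂ‖ + ‖⟪T n g - g, g⟫_ℂ‖ := by
        have := norm_add_le (⟪T n f - f, f⟫_ℂ - ⟪T n g - g, g⟫_ℂ) (⟪T n g - g, g⟫_ℂ)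
        simpa using this
    _ < ε / 2 + ε / 2 := add_lt_add hlip hsmall
    _ = ε := by ring
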